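/- Let R be an order in a number field K whose conductor P is a prime ideal of 𝓞_K, and suppose the class group Cl(𝓞_K) is trivial (𝓞_K is a principal ideal domain). Then the ideal class group Cl(R) is a cyclic group. -/

import Mathlib

set_option synthInstance.maxHeartbeats 1000000
set_option maxHeartbeats 1000000
set_option linter.unusedSectionVars false
open NumberField

/-- The conductor of a subring `R` of the ring of integers `𝓞 K`:
the set of `x ∈ 𝓞 K` such that `x • 𝓞 K ⊆ R`, as an ideal of `𝓞 K`. -/
noncomputable def conductorIdeal {K : Type*} [Field K] [NumberField K] (R : Subring (𝓞 K)) :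
    Ideal (𝓞 K) where
  carrier := {x | ∀ y : 𝓞 K, x * y ∈ R}
  add_mem' := fun {a b} ha hb y => by
    simpa [add_mul] using R.add_mem (ha y) (hb y)
  zero_mem' := fun y => by simpa using R.zero_mem
  smul_mem' := fun c x hx y => by
    simpa [smul_eq_mul, mul_comm, mul_assoc, mul_left_comm] using hx (c * y)

namespace Stmt14
open Pointwise
variable {K : Type*} [Field K] [NumberField K] (R : Subring (𝓞 K))

theorem conductor_subset_R {x : 𝓞 K} (hx : x ∈ conductorIdeal R) : x ∈ R := by
  simpa using hx 1

/-- The conductor as an `R`-submodule of `𝓞 K`. -/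
noncomputable def Isub : Submodule R (𝓞 K) :=
  Submodule.restrictScalars R (conductorIdeal R)

theorem mem_Isub {x : 𝓞 K} : x ∈ Isub R ↔ x ∈ conductorIdeal R := Iff.rfl

/-- The module `R·x + I`. -/
noncomputable def Mu (x : 𝓞 K) : Submodule R (𝓞 K) :=
  Submodule.span R {x} ⊔ Isub R

theorem smul_def' (r : R) (x : 𝓞 K) : r • x = (r : 𝓞 K) * x := rfl

theorem Isub_le_one : Isub R ≤ (1 : Submodule R (𝓞 K)) := by
  intro x hx
  rw [Submodule.one_eq_range]
  exact ⟨⟨x, conductor_subset_R R hx⟩, rfl⟩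

theorem one_eq_range' : (1 : Submodule R (𝓞 K)) = LinearMap.range (Algebra.linearMap R (𝓞 K)) :=
  Submodule.one_eq_range

theorem mem_one_iff {x : 𝓞 K} : x ∈ (1 : Submodule R (𝓞 K)) ↔ x ∈ R := by
  rw [Submodule.one_eq_range]
  constructor
  · rintro ⟨r, rfl⟩; exact r.2
  · intro hx; exact ⟨⟨x, hx⟩, rfl⟩

theorem span_mul_Isub_le (x : 𝓞 K) : Submodule.span R {x} * Isub R ≤ Isub R := by
  rw [Submodule.mul_le]
  intro m hm i hi
  rw [Submodule.mem_span_singleton] at hm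
  obtain ⟨r, rfl⟩ := hm
  rw [mem_Isub] at hi ⊢
  rw [smul_def']
  have : (r : 𝓞 K) * x * i = (r : 𝓞 K) * (x * i) := by ring
  rw [this]
  exact Ideal.mul_mem_left _ _ (Ideal.mul_mem_left _ _ hi)

theorem Isub_mul_Isub_le : Isub R * Isub R ≤ Isub R := by
  rw [Submodule.mul_le]
  intro m hm i hi
  rw [mem_Isub] at hm ⊢
  exact Ideal.mul_mem_right _ _ hm

theorem Isub_le_Mu (x : 𝓞 K) : Isub R ≤ Mu R x := le_sup_right

theorem mem_span_self (x : 𝓞 K) : x ∈ Submodule.span R {x} :=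
  Submodule.mem_span_singleton_self x

theorem Isub_le_Mu_mul_Mu {x y w : 𝓞 K} (h : 1 - x * y * w ∈ conductorIdeal R) :
    Isub R ≤ Mu R x * Mu R y := by
  intro i hi
  rw [mem_Isub] at hi
  have e : i = x * (y * w * i) + (1 - x * y * w) * i := by ring
  rw [e]
  refine Submodule.add_mem _ ?_ ?_
  · refine Submodule.mul_mem_mul (le_sup_left (a := Submodule.span R {x}) (mem_span_self R x)) ?_
    exact Isub_le_Mu R y (by
      rw [mem_Isub]
      have : y * w * i = i * (y * w) := by ring
      rw [this]
      exact Ideal.mul_mem_right _ _ hi)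
  · exact Submodule.mul_mem_mul (Isub_le_Mu R x (mem_Isub R |>.mpr h))
      (Isub_le_Mu R y (mem_Isub R |>.mpr hi))

theorem span_singleton_mul (x y : 𝓞 K) :
    Submodule.span R {x} * Submodule.span R {y} = Submodule.span R {x * y} := by
  rw [Submodule.span_mul_span, Set.singleton_mul_singleton]

theorem Mu_mul_Mu {x y : 𝓞 K} (h : ∃ w, 1 - x * y * w ∈ conductorIdeal R) :
    Mu R x * Mu R y = Mu R (x * y) := by
  obtain ⟨w, hw⟩ := h
  apply le_antisymm
  · rw [Mu, Mu, Submodule.sup_mul, Submodule.mul_sup, Submodule.mul_sup]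
    refine sup_le (sup_le ?_ ?_) (sup_le ?_ ?_)
    · rw [span_singleton_mul]; exact le_sup_left
    · exact le_trans (span_mul_Isub_le R x) le_sup_right
    · rw [mul_comm]; exact le_trans (span_mul_Isub_le R y) le_sup_right
    · exact le_trans (Isub_mul_Isub_le R) le_sup_right
  · refine sup_le ?_ (Isub_le_Mu_mul_Mu R hw)
    rw [← span_singleton_mul]
    exact mul_le_mul' le_sup_left le_sup_left

theorem Mu_congr {x y : 𝓞 K} (h : x - y ∈ conductorIdeal R) : Mu R x = Mu R y := by
  have key : ∀ a b : 𝓞 K, a - b ∈ conductorIdeal R → Mu R a ≤ Mu R b := by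
    intro a b hab
    refine sup_le ?_ le_sup_right
    rw [Submodule.span_le, Set.singleton_subset_iff]
    have e : a = b + (a - b) := by ring
    rw [e]
    exact Submodule.add_mem _ (le_sup_left (a := Submodule.span R {b}) (mem_span_self R b))
      (Isub_le_Mu R b (mem_Isub R |>.mpr hab))
  exact le_antisymm (key x y h) (key y x (by simpa using (conductorIdeal R).neg_mem h))

theorem Mu_one : Mu R 1 = 1 := by
  rw [Mu, ← Submodule.one_eq_span]
  exact sup_eq_left.mpr (Isub_le_one R)

theorem Mu_mul_Mu_inv {x y : 𝓞 K} (h : 1 - x * y ∈ conductorIdeal R) :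
    Mu R x * Mu R y = 1 := by
  rw [Mu_mul_Mu R ⟨1, by simpa using h⟩]
  have h2 : x * y - 1 ∈ conductorIdeal R := by
    have := (conductorIdeal R).neg_mem h
    simpa using this
  rw [Mu_congr R (x := x * y) (y := 1) h2]
  exact Mu_one R
theorem algebraMap_R_K_apply (x : R) : algebraMap R K x = algebraMap (𝓞 K) K (x : 𝓞 K) := rfl

theorem algebraMap_R_K_injective : Function.Injective (algebraMap R K) := by
  intro a b h
  rw [algebraMap_R_K_apply, algebraMap_R_K_apply] at h
  exact Subtype.ext (IsFractionRing.injective (𝓞 K) K h)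

theorem index_smul_mem (x : 𝓞 K) : (R.toAddSubgroup.index : 𝓞 K) * x ∈ R := by
  have := AddSubgroup.nsmul_index_mem R.toAddSubgroup x
  simpa [nsmul_eq_mul] using this

variable (hR : Finite ((𝓞 K) ⧸ R.toAddSubgroup))

include hR in
theorem index_ne_zero : R.toAddSubgroup.index ≠ 0 := by
  haveI := AddSubgroup.finiteIndex_of_finite_quotient (H := R.toAddSubgroup)
  exact AddSubgroup.FiniteIndex.index_ne_zero

include hR in
theorem index_cast_ne_zero : ((R.toAddSubgroup.index : 𝓞 K)) ≠ 0 :=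
  Nat.cast_ne_zero.mpr (index_ne_zero R hR)

include hR in
theorem isFractionRing : IsFractionRing R K where
  map_units := by
    rintro ⟨y, hy⟩
    have hy0 : (y : 𝓞 K) ≠ 0 := by
      intro h0
      exact nonZeroDivisors.coe_ne_zero ⟨y, hy⟩ (Subtype.ext h0)
    refine IsUnit.mk0 _ ?_
    rw [algebraMap_R_K_apply]
    intro h
    exact hy0 (IsFractionRing.injective (𝓞 K) K (by simpa using h))
  surj := by
    intro z
    obtain ⟨⟨a, b⟩, hab⟩ := IsLocalization.surj (nonZeroDivisors (𝓞 K)) z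
    dsimp only at hab
    set n := R.toAddSubgroup.index with hn
    have hb0 : ((b : 𝓞 K)) ≠ 0 := nonZeroDivisors.coe_ne_zero b
    have hnb0 : ((n : 𝓞 K)) * b ≠ 0 := mul_ne_zero (index_cast_ne_zero R hR) hb0
    refine ⟨⟨⟨(n : 𝓞 K) * a, index_smul_mem R a⟩,
        ⟨⟨(n : 𝓞 K) * b, index_smul_mem R b⟩, ?_⟩⟩, ?_⟩
    · exact mem_nonZeroDivisors_of_ne_zero (fun h => hnb0 (by
        simpa using congrArg Subtype.val h))
    · simp only [algebraMap_R_K_apply]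
      rw [map_mul, map_mul, mul_left_comm, hab]
  exists_of_eq := by
    intro x y h
    exact ⟨1, by rw [algebraMap_R_K_injective R h]⟩

/-- The inclusion `𝓞 K →ₗ[R] K`. -/
noncomputable def jmap : 𝓞 K →ₗ[R] K := (IsScalarTower.toAlgHom R (𝓞 K) K).toLinearMap

theorem jmap_apply (x : 𝓞 K) : jmap R x = algebraMap (𝓞 K) K x := rfl

theorem jmap_injective : Function.Injective (jmap R) :=
  IsFractionRing.injective (𝓞 K) K

include hR in
theorem isFractional_map (M : Submodule R (𝓞 K)) :
    IsFractional (nonZeroDivisors R) (M.map (jmap R)) := by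
  set n := R.toAddSubgroup.index with hn
  refine ⟨⟨(n : 𝓞 K), by simpa using index_smul_mem R 1⟩, ?_, ?_⟩
  · exact mem_nonZeroDivisors_of_ne_zero (fun h => (index_cast_ne_zero R hR)
      (by simpa using congrArg Subtype.val h))
  · rintro b ⟨m, hm, rfl⟩
    refine ⟨⟨(n : 𝓞 K) * m, index_smul_mem R m⟩, ?_⟩
    rw [algebraMap_R_K_apply, Algebra.smul_def, algebraMap_R_K_apply, jmap_apply]
    exact map_mul (algebraMap (𝓞 K) K) _ _

/-- The fractional ideal of `R` in `K` attached to an `R`-submodule of `𝓞 K`. -/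
noncomputable def FF (M : Submodule R (𝓞 K)) : FractionalIdeal (nonZeroDivisors R) K :=
  ⟨M.map (jmap R), isFractional_map R hR M⟩

theorem coe_FF (M : Submodule R (𝓞 K)) : (FF R hR M : Submodule R K) = M.map (jmap R) := rfl

theorem FF_mul (M N : Submodule R (𝓞 K)) : FF R hR (M * N) = FF R hR M * FF R hR N := by
  apply FractionalIdeal.coeToSubmodule_injective
  show (FF R hR (M * N) : Submodule R K) = ((FF R hR M * FF R hR N : FractionalIdeal (nonZeroDivisors R) K) : Submodule R K)
  rw [FractionalIdeal.coe_mul, coe_FF, coe_FF, coe_FF]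
  exact Submodule.map_mul M N (IsScalarTower.toAlgHom R (𝓞 K) K)

theorem FF_one : FF R hR 1 = 1 := by
  apply FractionalIdeal.coeToSubmodule_injective
  show (FF R hR 1 : Submodule R K) = ((1 : FractionalIdeal (nonZeroDivisors R) K) : Submodule R K)
  rw [FractionalIdeal.coe_one, coe_FF]
  exact Submodule.map_one (IsScalarTower.toAlgHom R (𝓞 K) K)



theorem index_cast_mem_conductor : ((R.toAddSubgroup.index : 𝓞 K)) ∈ conductorIdeal R :=
  fun y => index_smul_mem R y

include hR in
theorem conductor_ne_bot : conductorIdeal R ≠ ⊥ := by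
  intro h
  have h2 := index_cast_mem_conductor R
  rw [h, Ideal.mem_bot] at h2
  exact index_cast_ne_zero R hR h2

include hR in
theorem finite_quot : Finite ((𝓞 K) ⧸ conductorIdeal R) := by
  haveI := Ideal.finiteQuotientOfFreeOfNeBot (conductorIdeal R) (conductor_ne_bot R hR)
  infer_instance

include hR in
theorem conductor_isMaximal (hP : (conductorIdeal R).IsPrime) : (conductorIdeal R).IsMaximal :=
  Ideal.IsPrime.isMaximal hP (conductor_ne_bot R hR)

theorem mem_one_OK {x : K} :
    x ∈ (1 : Submodule (𝓞 K) K) ↔ ∃ m : 𝓞 K, algebraMap (𝓞 K) K m = x := by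
  rw [Submodule.one_eq_range]
  exact Iff.rfl

theorem map_comap_self (Vv : Submodule R K)
    (hV : Submodule.span (𝓞 K) (Vv : Set K) = (1 : Submodule (𝓞 K) K)) :
    Submodule.map (jmap R) (Vv.comap (jmap R)) = Vv := by
  apply Submodule.map_comap_eq_self
  intro v hv
  have h1 : v ∈ (1 : Submodule (𝓞 K) K) := by
    rw [← hV]; exact Submodule.subset_span hv
  obtain ⟨m, hm⟩ := mem_one_OK.mp h1
  exact ⟨m, hm⟩

theorem span_comap_eq_top (Vv : Submodule R K)
    (hV : Submodule.span (𝓞 K) (Vv : Set K) = (1 : Submodule (𝓞 K) K)) :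
    Ideal.span ((Vv.comap (jmap R) : Submodule R (𝓞 K)) : Set (𝓞 K)) = ⊤ := by
  have h1 : (1 : K) ∈ Submodule.span (𝓞 K) (Vv : Set K) := by
    rw [hV]; exact mem_one_OK.mpr ⟨1, map_one _⟩
  have key : ∀ (t : K), t ∈ Submodule.span (𝓞 K) (Vv : Set K) →
      ∃ m ∈ Ideal.span ((Vv.comap (jmap R) : Submodule R (𝓞 K)) : Set (𝓞 K)),
        algebraMap (𝓞 K) K m = t := by
    intro t ht
    induction ht using Submodule.span_induction with
    | mem x hx =>
      have hx1 : x ∈ (1 : Submodule (𝓞 K) K) := by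
        rw [← hV]; exact Submodule.subset_span hx
      obtain ⟨m, hm⟩ := mem_one_OK.mp hx1
      refine ⟨m, Ideal.subset_span ?_, hm⟩
      show m ∈ Vv.comap (jmap R)
      rw [Submodule.mem_comap, jmap_apply, hm]
      exact hx
    | zero => exact ⟨0, zero_mem _, map_zero _⟩
    | add x y hx hy ihx ihy =>
      obtain ⟨m, hm, hm2⟩ := ihx
      obtain ⟨m', hm', hm2'⟩ := ihy
      exact ⟨m + m', add_mem hm hm', by rw [map_add, hm2, hm2']⟩
    | smul a x hx ih =>
      obtain ⟨m, hm, hm2⟩ := ih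
      exact ⟨a * m, Ideal.mul_mem_left _ _ hm, by rw [map_mul, hm2, Algebra.smul_def]⟩
  obtain ⟨m, hm, hm2⟩ := key 1 h1
  have hm1 : m = 1 := IsFractionRing.injective (𝓞 K) K (by rw [hm2, map_one])
  rw [Ideal.eq_top_iff_one, ← hm1]
  exact hm

theorem Isub_le_of_span_top (N : Submodule R (𝓞 K))
    (hspan : Ideal.span (N : Set (𝓞 K)) = ⊤) : Isub R ≤ N := by
  have key : ∀ t ∈ Ideal.span (N : Set (𝓞 K)), ∀ i ∈ conductorIdeal R, i * t ∈ N := by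
    intro t ht
    induction ht using Submodule.span_induction with
    | mem x hx =>
      intro i hi
      have he : i * x = (⟨i, conductor_subset_R R hi⟩ : R) • x := rfl
      rw [he]
      exact N.smul_mem _ hx
    | zero =>
      intro i hi
      simpa using N.zero_mem
    | add x y hx hy ihx ihy =>
      intro i hi
      rw [mul_add]
      exact N.add_mem (ihx i hi) (ihy i hi)
    | smul a x hx ih =>
      intro i hi
      have he : i * (a • x) = (i * a) * x := by
        rw [smul_eq_mul]; ring
      rw [he]
      exact ih (i * a) (Ideal.mul_mem_right a _ hi)
  intro i hi
  have h1 : (1 : 𝓞 K) ∈ Ideal.span (N : Set (𝓞 K)) := by rw [hspan]; trivial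
  simpa using key 1 h1 i hi

theorem exists_mem_notMem (hP : (conductorIdeal R).IsPrime) (N : Submodule R (𝓞 K))
    (hspan : Ideal.span (N : Set (𝓞 K)) = ⊤) :
    ∃ u, u ∈ N ∧ u ∉ conductorIdeal R := by
  by_contra h
  push_neg at h
  have hle : Ideal.span (N : Set (𝓞 K)) ≤ conductorIdeal R :=
    Ideal.span_le.mpr (fun x hx => h x hx)
  rw [hspan] at hle
  exact hP.ne_top (top_le_iff.mp hle)

theorem span_inv_eq_one (V V₂ : Submodule R K) (hmul : V * V₂ = 1)
    (hV : Submodule.span (𝓞 K) (V : Set K) = (1 : Submodule (𝓞 K) K)) :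
    Submodule.span (𝓞 K) (V₂ : Set K) = (1 : Submodule (𝓞 K) K) := by
  have hone : (1 : Submodule R K) = Submodule.span R {(1 : K)} := Submodule.one_eq_span
  have e1 : Submodule.span (𝓞 K) (V₂ : Set K) * (1 : Submodule (𝓞 K) K)
      = Submodule.span (𝓞 K) (V₂ : Set K) := mul_one _
  calc Submodule.span (𝓞 K) (V₂ : Set K)
      = Submodule.span (𝓞 K) (V₂ : Set K) * Submodule.span (𝓞 K) (V : Set K) := by
        rw [hV, e1]
    _ = Submodule.span (𝓞 K) ((V₂ : Set K) * (V : Set K)) := Submodule.span_mul_span _ _ _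
    _ = Submodule.span (𝓞 K) ((V₂ * V : Submodule R K) : Set K) := by
        rw [Submodule.mul_eq_span_mul_set V₂ V, Submodule.span_span_of_tower]
    _ = Submodule.span (𝓞 K) (((1 : Submodule R K) : Set K)) := by
        rw [mul_comm, hmul]
    _ = (1 : Submodule (𝓞 K) K) := by
        rw [hone, Submodule.span_span_of_tower, ← Submodule.one_eq_span]

theorem finite_subring_inv (hFin : Finite ((𝓞 K) ⧸ conductorIdeal R))
    (hDom : IsDomain ((𝓞 K) ⧸ conductorIdeal R)) (r : R)
    (ht0 : Ideal.Quotient.mk (conductorIdeal R) (r : 𝓞 K) ≠ 0) :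
    ∃ w : 𝓞 K, w ∈ R ∧ Ideal.Quotient.mk (conductorIdeal R) ((r : 𝓞 K) * w) = 1 := by
  set S := Subring.map (Ideal.Quotient.mk (conductorIdeal R)) R with hS
  haveI : Finite S := Subtype.finite
  haveI : IsDomain S := Subring.instIsDomainSubtypeMem S
  have hfield : IsField S := Finite.isField_of_domain S
  have htmem : Ideal.Quotient.mk (conductorIdeal R) (r : 𝓞 K) ∈ S :=
    ⟨(r : 𝓞 K), r.2, rfl⟩
  obtain ⟨b, hb⟩ := hfield.mul_inv_cancel (a := ⟨_, htmem⟩)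
    (fun hc => ht0 (by simpa using congrArg Subtype.val hc))
  obtain ⟨w, hwR, hw⟩ := b.2
  refine ⟨w, hwR, ?_⟩
  have hval : (Ideal.Quotient.mk (conductorIdeal R) ((r : 𝓞 K))) * (b : (𝓞 K) ⧸ conductorIdeal R) = 1 := by
    simpa using congrArg Subtype.val hb
  rw [map_mul, hw]
  exact hval

end Stmt14

open Stmt14

/-- If the conductor of the order `R` is a prime ideal of `𝓞 K` and the class group of
`𝓞 K` is trivial, then `Cl(R)` is cyclic. -/
theorem stmt_14 {K : Type*} [Field K] [NumberField K] (R : Subring (𝓞 K))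
    (hR : Finite ((𝓞 K) ⧸ R.toAddSubgroup))
    (hP : (conductorIdeal R).IsPrime)
    (htriv : ∀ c : ClassGroup (𝓞 K), c = 1) :
    IsCyclic (ClassGroup R) := by
  haveI hFin : Finite ((𝓞 K) ⧸ conductorIdeal R) := finite_quot R hR
  haveI hMax : (conductorIdeal R).IsMaximal := conductor_isMaximal R hR hP
  letI : Field ((𝓞 K) ⧸ conductorIdeal R) := Ideal.Quotient.field _
  haveI hFR : IsFractionRing R K := isFractionRing R hR
  set q : 𝓞 K →+* (𝓞 K) ⧸ conductorIdeal R := Ideal.Quotient.mk (conductorIdeal R) with hq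
  have qsurj : Function.Surjective q := Ideal.Quotient.mk_surjective
  set L : ((𝓞 K) ⧸ conductorIdeal R) → 𝓞 K := fun a => (qsurj a).choose with hLdef
  have hL : ∀ a, q (L a) = a := fun a => (qsurj a).choose_spec
  have hsub : ∀ x y : 𝓞 K, q x = q y → x - y ∈ conductorIdeal R := fun x y h =>
    Ideal.Quotient.eq.mp h
  have key : ∀ u : (((𝓞 K) ⧸ conductorIdeal R))ˣ,
      1 - L ↑u * L ↑u⁻¹ ∈ conductorIdeal R := by
    intro u
    have h1 : q 1 = q (L ↑u * L ↑u⁻¹) := by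
      rw [map_one, map_mul, hL, hL, Units.mul_inv]
    exact hsub _ _ h1
  have key' : ∀ u : (((𝓞 K) ⧸ conductorIdeal R))ˣ,
      1 - L ↑u⁻¹ * L ↑u ∈ conductorIdeal R := by
    intro u
    have := key u
    rwa [mul_comm] at this
  let Uu : (((𝓞 K) ⧸ conductorIdeal R))ˣ → (FractionalIdeal (nonZeroDivisors R) K)ˣ := fun u =>
    ⟨FF R hR (Mu R (L ↑u)), FF R hR (Mu R (L ↑u⁻¹)),
      by rw [← FF_mul, Mu_mul_Mu_inv R (key u), FF_one],
      by rw [← FF_mul, Mu_mul_Mu_inv R (key' u), FF_one]⟩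
  have hUumul : ∀ a b, Uu (a * b) = Uu a * Uu b := by
    intro a b
    apply Units.ext
    show FF R hR (Mu R (L ↑(a * b))) = FF R hR (Mu R (L ↑a)) * FF R hR (Mu R (L ↑b))
    have hw : ∃ w, 1 - L ↑a * L ↑b * w ∈ conductorIdeal R := by
      refine ⟨L ↑(a * b)⁻¹, hsub _ _ ?_⟩
      rw [map_one, map_mul, map_mul, hL, hL, hL]
      rw [← Units.val_mul, Units.mul_inv]
    have hcong : L ↑a * L ↑b - L ↑(a * b) ∈ conductorIdeal R := by
      refine hsub _ _ ?_
      rw [map_mul, hL, hL, hL, Units.val_mul]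
    rw [← FF_mul, Mu_mul_Mu R hw, Mu_congr R hcong]
  let f : (((𝓞 K) ⧸ conductorIdeal R))ˣ →* ClassGroup R :=
    MonoidHom.mk' (fun u => ClassGroup.mk K (Uu u)) (by
      intro a b
      show ClassGroup.mk K (Uu (a * b)) = ClassGroup.mk K (Uu a) * ClassGroup.mk K (Uu b)
      rw [hUumul, map_mul])
  apply isCyclic_of_surjective f
  intro c
  refine ClassGroup.induction (R := R) (K := K) (fun J => ?_) c
  -- `T` is the `𝓞 K`-span of `J` in `K`; it is principal since `Cl(𝓞 K)` is trivial.
  obtain ⟨a, haR, ha⟩ := (J : FractionalIdeal (nonZeroDivisors R) K).isFractional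
  set Vj : Submodule R K := ((J : FractionalIdeal (nonZeroDivisors R) K) : Submodule R K)
    with hVjdef
  set T : Submodule (𝓞 K) K := Submodule.span (𝓞 K) (Vj : Set K) with hTdef
  have ha0 : (a : 𝓞 K) ≠ 0 := fun h =>
    nonZeroDivisors.coe_ne_zero ⟨a, haR⟩ (Subtype.ext h)
  have hTfrac : IsFractional (nonZeroDivisors (𝓞 K)) T := by
    refine ⟨(a : 𝓞 K), mem_nonZeroDivisors_of_ne_zero ha0, ?_⟩
    intro b hb
    induction hb using Submodule.span_induction with
    | mem x hx =>
      obtain ⟨r, hr⟩ := ha x hx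
      refine ⟨(r : 𝓞 K), ?_⟩
      have he : ((a : 𝓞 K)) • x = a • x := algebraMap_smul (𝓞 K) a x
      rw [he, ← hr]
      rfl
    | zero => exact ⟨0, by rw [map_zero, smul_zero]⟩
    | add x y hx hy ihx ihy =>
      obtain ⟨m, hm⟩ := ihx
      obtain ⟨m', hm'⟩ := ihy
      exact ⟨m + m', by rw [map_add, hm, hm', smul_add]⟩
    | smul c x hx ih =>
      obtain ⟨m, hm⟩ := ih
      refine ⟨c * m, ?_⟩
      rw [map_mul, hm, smul_comm]
      exact (Algebra.smul_def _ _).symm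
  set JO : FractionalIdeal (nonZeroDivisors (𝓞 K)) K := ⟨T, hTfrac⟩ with hJOdef
  have hVjne : Vj ≠ ⊥ := by
    intro h
    have h0 : (J : FractionalIdeal (nonZeroDivisors R) K) = 0 := by
      apply FractionalIdeal.coeToSubmodule_injective
      show ((J : FractionalIdeal (nonZeroDivisors R) K) : Submodule R K)
          = ((0 : FractionalIdeal (nonZeroDivisors R) K) : Submodule R K)
      rw [← hVjdef, h, FractionalIdeal.coe_zero]
    exact FractionalIdeal.ne_zero_of_mul_eq_one _ _ J.val_inv h0
  have hTne : JO ≠ 0 := by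
    intro h
    apply hVjne
    have hT0 : T = ⊥ := by
      have h2 := congrArg
        (fun I : FractionalIdeal (nonZeroDivisors (𝓞 K)) K => (I : Submodule (𝓞 K) K)) h
      exact (by simpa using h2 : (JO : Submodule (𝓞 K) K) = ⊥)
    apply (Submodule.eq_bot_iff _).mpr
    intro x hx
    have hxT : x ∈ T := Submodule.subset_span hx
    rw [hT0] at hxT
    simpa using hxT
  have hprin : Submodule.IsPrincipal T := by
    have h1 := htriv (ClassGroup.mk K (Units.mk0 JO hTne))
    exact ClassGroup.mk_eq_one_iff.mp h1
  obtain ⟨γ, hγ⟩ := hprin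
  have hγ0 : γ ≠ 0 := by
    rintro rfl
    apply hTne
    apply FractionalIdeal.coeToSubmodule_injective
    show T = (0 : FractionalIdeal (nonZeroDivisors (𝓞 K)) K)
    rw [hγ]
    simp
  set γu : Kˣ := Units.mk0 γ hγ0 with hγu
  set J₁ : (FractionalIdeal (nonZeroDivisors R) K)ˣ := J * (toPrincipalIdeal R K γu)⁻¹
    with hJ₁def
  set V : Submodule R K := ((J₁ : FractionalIdeal (nonZeroDivisors R) K) : Submodule R K)
    with hVdef
  have hVcoe : V = Vj * Submodule.span R {γ⁻¹} := by
    rw [hVdef, hJ₁def]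
    rw [Units.val_mul, FractionalIdeal.coe_mul, ← hVjdef]
    congr 1
    rw [← map_inv, coe_toPrincipalIdeal, FractionalIdeal.coe_spanSingleton]
    simp [hγu]
  have hVint : ∀ v ∈ V, ∃ m : 𝓞 K, algebraMap (𝓞 K) K m = v := by
    intro v hv
    rw [hVcoe] at hv
    refine Submodule.mul_induction_on hv ?_ ?_
    · intro x hx y hy
      obtain ⟨r, hr⟩ := Submodule.mem_span_singleton.mp hy
      have hxT : x ∈ T := Submodule.subset_span hx
      rw [hγ] at hxT
      obtain ⟨cc, hcc⟩ := Submodule.mem_span_singleton.mp hxT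
      refine ⟨(r : 𝓞 K) * cc, ?_⟩
      rw [map_mul, ← hcc, ← hr, Algebra.smul_def, Algebra.smul_def, algebraMap_R_K_apply R r]
      field_simp
    · intro x y hx hy
      obtain ⟨m, hm⟩ := hx
      obtain ⟨m', hm'⟩ := hy
      exact ⟨m + m', by rw [map_add, hm, hm']⟩
  have hVspan : Submodule.span (𝓞 K) (V : Set K) = (1 : Submodule (𝓞 K) K) := by
    apply le_antisymm
    · rw [Submodule.span_le]
      intro v hv
      exact mem_one_OK.mpr (hVint v hv)
    · have h1V : (1 : K) ∈ Submodule.span (𝓞 K) (V : Set K) := by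
        have hγT : γ ∈ T := by
          rw [hγ]
          exact Submodule.mem_span_singleton_self γ
        have hind : ∀ t ∈ T, γ⁻¹ * t ∈ Submodule.span (𝓞 K) (V : Set K) := by
          intro t ht
          rw [hTdef] at ht
          induction ht using Submodule.span_induction with
          | mem x hx =>
            have hxV : x * γ⁻¹ ∈ V := by
              rw [hVcoe]
              exact Submodule.mul_mem_mul hx (Submodule.mem_span_singleton_self _)
            rw [mul_comm]
            exact Submodule.subset_span hxV
          | zero =>
            rw [mul_zero]
            exact Submodule.zero_mem _
          | add x y hx hy ihx ihy =>
            rw [mul_add]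
            exact Submodule.add_mem _ ihx ihy
          | smul cc x hx ih =>
            rw [mul_smul_comm]
            exact Submodule.smul_mem _ _ ih
        have := hind γ hγT
        rwa [inv_mul_cancel₀ hγ0] at this
      intro x hx
      obtain ⟨m, hm⟩ := mem_one_OK.mp hx
      have : x = m • (1 : K) := by rw [← hm, Algebra.smul_def, mul_one]
      rw [this]
      exact Submodule.smul_mem _ _ h1V
  -- the comap `N` of `V` in `𝓞 K`
  set N : Submodule R (𝓞 K) := V.comap (jmap R) with hNdef
  have hmapN : Submodule.map (jmap R) N = V := map_comap_self R V hVspan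
  have hNtop : Ideal.span ((N : Submodule R (𝓞 K)) : Set (𝓞 K)) = ⊤ :=
    span_comap_eq_top R V hVspan
  have hIN : Isub R ≤ N := Isub_le_of_span_top R N hNtop
  obtain ⟨u₀, hu₀N, hu₀I⟩ := exists_mem_notMem R hP N hNtop
  -- same for the inverse
  set V₂ : Submodule R K := (((J₁⁻¹ : (FractionalIdeal (nonZeroDivisors R) K)ˣ) :
      FractionalIdeal (nonZeroDivisors R) K) : Submodule R K) with hV₂def
  have hVV₂ : V * V₂ = 1 := by
    rw [hVdef, hV₂def, ← FractionalIdeal.coe_mul]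
    rw [Units.mul_inv]
    exact FractionalIdeal.coe_one
  have hV₂span : Submodule.span (𝓞 K) (V₂ : Set K) = (1 : Submodule (𝓞 K) K) :=
    span_inv_eq_one R V V₂ hVV₂ hVspan
  set N₂ : Submodule R (𝓞 K) := V₂.comap (jmap R) with hN₂def
  have hmapN₂ : Submodule.map (jmap R) N₂ = V₂ := map_comap_self R V₂ hV₂span
  have hN₂top : Ideal.span ((N₂ : Submodule R (𝓞 K)) : Set (𝓞 K)) = ⊤ :=
    span_comap_eq_top R V₂ hV₂span
  obtain ⟨v₀, hv₀N, hv₀I⟩ := exists_mem_notMem R hP N₂ hN₂top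
  have hNN₂ : N * N₂ = 1 := by
    apply Submodule.map_injective_of_injective (jmap_injective R)
    have h1 : Submodule.map (jmap R) (N * N₂)
        = Submodule.map (jmap R) N * Submodule.map (jmap R) N₂ :=
      Submodule.map_mul N N₂ (IsScalarTower.toAlgHom R (𝓞 K) K)
    have h2 : Submodule.map (jmap R) (1 : Submodule R (𝓞 K)) = (1 : Submodule R K) :=
      Submodule.map_one (IsScalarTower.toAlgHom R (𝓞 K) K)
    rw [h1, h2, hmapN, hmapN₂, hVV₂]
  -- now the finite field argument: `N = Mu R u₀`
  have hqu₀ : q u₀ ≠ 0 := fun h => hu₀I (Ideal.Quotient.eq_zero_iff_mem.mp h)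
  have hqv₀ : q v₀ ≠ 0 := fun h => hv₀I (Ideal.Quotient.eq_zero_iff_mem.mp h)
  have huv : u₀ * v₀ ∈ (1 : Submodule R (𝓞 K)) := by
    rw [← hNN₂]
    exact Submodule.mul_mem_mul hu₀N hv₀N
  have huvR : u₀ * v₀ ∈ R := (mem_one_iff R).mp huv
  have hq_r₀ : q ((⟨u₀ * v₀, huvR⟩ : R) : 𝓞 K) ≠ 0 := by
    show q (u₀ * v₀) ≠ 0
    rw [map_mul]
    exact mul_ne_zero hqu₀ hqv₀
  obtain ⟨w, hwR, hw⟩ := finite_subring_inv R hFin inferInstance ⟨u₀ * v₀, huvR⟩ hq_r₀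
  have hNMu : N = Mu R u₀ := by
    apply le_antisymm
    · intro x hx
      have hxv : x * v₀ ∈ (1 : Submodule R (𝓞 K)) := by
        rw [← hNN₂]
        exact Submodule.mul_mem_mul hx hv₀N
      have hxvR : x * v₀ ∈ R := (mem_one_iff R).mp hxv
      -- x ≡ (x*v₀*w) * u₀ mod I
      have hcong : x - (x * v₀ * w) * u₀ ∈ conductorIdeal R := by
        apply hsub
        have h1 : q (x * v₀ * w * u₀) = q x * q (u₀ * v₀ * w) := by
          rw [map_mul, map_mul, map_mul, map_mul, map_mul]
          ring
        rw [h1, hw, mul_one]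
      have hmem : (x * v₀ * w) * u₀ ∈ Mu R u₀ := by
        have : (x * v₀ * w) * u₀ = (⟨x * v₀ * w, R.mul_mem hxvR hwR⟩ : R) • u₀ := rfl
        rw [this]
        exact le_sup_left (a := Submodule.span R {u₀})
          (Submodule.smul_mem _ _ (mem_span_self R u₀))
      have he : x = (x * v₀ * w) * u₀ + (x - (x * v₀ * w) * u₀) := by ring
      rw [he]
      exact Submodule.add_mem _ hmem (Isub_le_Mu R u₀ ((mem_Isub R).mpr hcong))
    · refine sup_le ?_ hIN
      rw [Submodule.span_le, Set.singleton_subset_iff]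
      exact hu₀N
  -- conclude
  set uu : (((𝓞 K) ⧸ conductorIdeal R))ˣ := Units.mk0 (q u₀) hqu₀ with huu
  refine ⟨uu, ?_⟩
  have hUuval : Uu uu = J₁ := by
    apply Units.ext
    show FF R hR (Mu R (L ↑uu)) = (J₁ : FractionalIdeal (nonZeroDivisors R) K)
    have hLu : L ↑uu - u₀ ∈ conductorIdeal R := by
      apply hsub
      rw [hL]
      rfl
    apply FractionalIdeal.coeToSubmodule_injective
    show ((FF R hR (Mu R (L ↑uu))) : Submodule R K)
        = ((J₁ : FractionalIdeal (nonZeroDivisors R) K) : Submodule R K)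
    rw [coe_FF, Mu_congr R hLu, ← hNMu, hmapN, hVdef]
  have hprin1 : ClassGroup.mk K (toPrincipalIdeal R K γu) = 1 := by
    apply ClassGroup.mk_eq_one_iff.mpr
    refine ⟨⟨γ, ?_⟩⟩
    rw [coe_toPrincipalIdeal, FractionalIdeal.coe_spanSingleton]
    rw [hγu]
    simp
  show ClassGroup.mk K (Uu uu) = ClassGroup.mk K J
  rw [hUuval, hJ₁def, map_mul, map_inv, hprin1, inv_one, mul_one]
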